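/- Lemma 3 (filtered error relation for the SO(3)/DCM parameterization): let C : ℝ → ℝ^{3×3} be differentiable with C(t) ∈ SO(3) for all t, and let ω̃ : ℝ → ℝ³ satisfy Poisson's equation Ċ(t) = −ω̃(t)^× C(t). Let r, r_d : ℝ → ℝ³ be differentiable, let ω_d : ℝ → ℝ³, and set ω(t) := ω_d(t) + ω̃(t). Assume tr(C(t)) I₃ − C(t) is invertible for all t, and let Λ ∈ ℝ^{6×6} be symmetric positive definite. Define p̃(t) := (r(t) − r_d(t), 𝒫(C(t))^V) ∈ ℝ⁶, s(t) := ṗ̃(t) + Λ p̃(t), P(t) := blkdiag(I₃, −2(tr(C(t)) I₃ − C(t))⁻¹), ν(t) := (ṙ(t), ω(t)), ν_d(t) := (ṙ_d(t), ω_d(t)), and ν_r(t) := ν_d(t) − P(t) Λ p̃(t). Then ν(t) − ν_r(t) = P(t) s(t) for all t. -/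
import Mathlib

open Matrix

attribute [local instance] Matrix.normedAddCommGroup Matrix.normedSpace

/-- The cross (skew-symmetric) operator `v^×` with `v^× w = v × w`. -/
def crossMat (v : Fin 3 → ℝ) : Matrix (Fin 3) (Fin 3) ℝ :=
  !![0, -v 2, v 1; v 2, 0, -v 0; -v 1, v 0, 0]

/-- The uncross operator `(·)^V`, the inverse of `crossMat` on skew-symmetric
matrices. -/
def uncross (A : Matrix (Fin 3) (Fin 3) ℝ) : Fin 3 → ℝ := ![A 2 1, A 0 2, A 1 0]

/-- The antisymmetric projection operator `𝒫(U) = ½(U − Uᵀ)`. -/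
noncomputable def projAnti (U : Matrix (Fin 3) (Fin 3) ℝ) : Matrix (Fin 3) (Fin 3) ℝ :=
  (1 / 2 : ℝ) • (U - Uᵀ)

/-- Concatenation of two vectors in `ℝ³` into a vector in `ℝ⁶`. -/
def vcat (a b : Fin 3 → ℝ) : Fin 6 → ℝ := Fin.append a b

/-- Block-diagonal `6 × 6` matrix with `3 × 3` diagonal blocks `A` and `B`. -/
def blkdiag (A B : Matrix (Fin 3) (Fin 3) ℝ) : Matrix (Fin 6) (Fin 6) ℝ :=
  Matrix.reindex finSumFinEquiv finSumFinEquiv (Matrix.fromBlocks A 0 0 B)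

lemma vcat_apply_equiv (a b : Fin 3 → ℝ) (x : Fin 3 ⊕ Fin 3) :
    vcat a b (finSumFinEquiv x) = Sum.elim a b x := by
  cases x with
  | inl i => exact Fin.append_left a b i
  | inr i => exact Fin.append_right a b i

lemma vcat_eq_elim (a b : Fin 3 → ℝ) :
    vcat a b = Sum.elim a b ∘ finSumFinEquiv.symm := by
  funext i
  have h := vcat_apply_equiv a b (finSumFinEquiv.symm i)
  rwa [Equiv.apply_symm_apply] at h

lemma blkdiag_mulVec (A B : Matrix (Fin 3) (Fin 3) ℝ) (a b : Fin 3 → ℝ) :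
    blkdiag A B *ᵥ vcat a b = vcat (A *ᵥ a) (B *ᵥ b) := by
  rw [vcat_eq_elim a b, vcat_eq_elim (A *ᵥ a) (B *ᵥ b), blkdiag, Matrix.reindex_apply,
    Matrix.submatrix_mulVec_equiv]
  have : (Sum.elim a b ∘ ⇑finSumFinEquiv.symm) ∘ ⇑finSumFinEquiv.symm.symm = Sum.elim a b := by
    funext x; simp
  rw [this, Matrix.fromBlocks_mulVec]
  congr 1
  funext x
  cases x <;> simp

lemma funext_via (u v : Fin 6 → ℝ)
    (h : ∀ x : Fin 3 ⊕ Fin 3, u (finSumFinEquiv x) = v (finSumFinEquiv x)) : u = v := by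
  funext i
  have := h (finSumFinEquiv.symm i)
  rwa [Equiv.apply_symm_apply] at this

lemma vcat_sub (a b c d : Fin 3 → ℝ) : vcat a b - vcat c d = vcat (a - c) (b - d) := by
  apply funext_via
  intro x
  cases x <;> simp [vcat_apply_equiv]

lemma key (a : Fin 3 → ℝ) (B : Matrix (Fin 3) (Fin 3) ℝ) :
    uncross (projAnti (-(crossMat a * B))) =
      (-(1/2) : ℝ) • ((B.trace • (1 : Matrix (Fin 3) (Fin 3) ℝ) - B) *ᵥ a) := by
  funext i
  fin_cases i <;>
    · simp only [uncross, projAnti, crossMat, Matrix.neg_mul, Matrix.neg_apply,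
        Matrix.smul_apply, Matrix.sub_apply, Matrix.transpose_apply, Matrix.mul_apply,
        Matrix.mulVec, Matrix.trace, Matrix.diag, dotProduct, Fin.sum_univ_three,
        Matrix.one_apply, Pi.smul_apply, smul_eq_mul, Matrix.cons_val', Matrix.cons_val_zero,
        Matrix.cons_val_one, Matrix.head_cons, Matrix.empty_val', Matrix.cons_val_fin_one,
        Matrix.head_fin_const, Matrix.of_apply, Fin.isValue, Matrix.cons_val_two,
        Matrix.tail_cons, Fin.reduceFinMk, Fin.reduceEq, ite_true, ite_false]
      ring

/-- **Lemma 3 (filtered error relation for the SO(3)/DCM parameterization).**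
With `C ∈ SO(3)` satisfying Poisson's equation `Ċ = −ω̃^× C`, `ω = ω_d + ω̃`,
`tr(C) I₃ − C` invertible, pose error `p̃ = (r − r_d, 𝒫(C)^V)`, filtered error
`s = ṗ̃ + Λ p̃` (the attitude rate being `𝒫(Ċ)^V` by linearity),
`P = blkdiag(I₃, −2(tr(C) I₃ − C)⁻¹)`, `ν = (ṙ, ω)`, `ν_d = (ṙ_d, ω_d)`, and
`ν_r = ν_d − P Λ p̃`, one has `ν − ν_r = P s` for all `t`. -/
theorem filtered_error_SO3
    (C : ℝ → Matrix (Fin 3) (Fin 3) ℝ)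
    (ωtil ωd ω : ℝ → Fin 3 → ℝ)
    (r r' rd rd' : ℝ → Fin 3 → ℝ)
    (Λ : Matrix (Fin 6) (Fin 6) ℝ) (hΛ : Λ.PosDef)
    (hSO3 : ∀ t, (C t)ᵀ * C t = 1 ∧ (C t).det = 1)
    (hC : ∀ t, HasDerivAt C (-(crossMat (ωtil t) * C t)) t)
    (hr : ∀ t, HasDerivAt r (r' t) t)
    (hrd : ∀ t, HasDerivAt rd (rd' t) t)
    (hω : ∀ t, ω t = ωd t + ωtil t)
    (hinv : ∀ t,
      IsUnit ((Matrix.trace (C t)) • (1 : Matrix (Fin 3) (Fin 3) ℝ) - C t).det)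
    (ptil s ν νd νr : ℝ → Fin 6 → ℝ)
    (P : ℝ → Matrix (Fin 6) (Fin 6) ℝ)
    (hptil : ∀ t, ptil t = vcat (r t - rd t) (uncross (projAnti (C t))))
    (hsdef : ∀ t, s t =
      vcat (r' t - rd' t) (uncross (projAnti (-(crossMat (ωtil t) * C t)))) +
        Λ *ᵥ ptil t)
    (hP : ∀ t, P t = blkdiag 1
      (-(2 : ℝ) • ((Matrix.trace (C t)) • (1 : Matrix (Fin 3) (Fin 3) ℝ) - C t)⁻¹))
    (hν : ∀ t, ν t = vcat (r' t) (ω t))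
    (hνd : ∀ t, νd t = vcat (rd' t) (ωd t))
    (hνr : ∀ t, νr t = νd t - P t *ᵥ (Λ *ᵥ ptil t)) :
    ∀ t, ν t - νr t = P t *ᵥ s t := by
  intro t
  set A : Matrix (Fin 3) (Fin 3) ℝ :=
    (Matrix.trace (C t)) • (1 : Matrix (Fin 3) (Fin 3) ℝ) - C t with hA
  have hMu : (-(2 : ℝ) • A⁻¹) *ᵥ uncross (projAnti (-(crossMat (ωtil t) * C t))) = ωtil t := by
    rw [key, ← hA, Matrix.mulVec_smul, Matrix.smul_mulVec, Matrix.mulVec_mulVec,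
      Matrix.nonsing_inv_mul A (by rw [hA]; exact hinv t), Matrix.one_mulVec, smul_smul]
    norm_num
  rw [hνr, hν, hνd, hsdef, Matrix.mulVec_add, hP, ← hA, blkdiag_mulVec, Matrix.one_mulVec, hMu]
  have h1 : vcat (r' t) (ω t) - vcat (rd' t) (ωd t) = vcat (r' t - rd' t) (ωtil t) := by
    apply funext_via
    intro x
    cases x <;> simp [vcat_apply_equiv, hω t]
  rw [← h1]
  abel
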